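/- arXiv:2109.01656 — 3 statements merged into one kernel-verified Lean document; each statement's English description precedes it below -/
import Mathlib

section
/- Let a, b, c, d be positive reals with a + b = c + d and a ≥ c. Then the Beta(a, b) distribution stochastically dominates the Beta(c, d) distribution: for all x ∈ [0,1], the CDF satisfies F_{Beta(a,b)}(x) ≤ F_{Beta(c,d)}(x). -/
open MeasureTheory

/-- CDF of the Beta distribution with parameters `a, b > 0`. -/
noncomputable def betaCDF (a b x : ℝ) : ℝ :=
  (∫ t in Set.Ioc (0:ℝ) x, t ^ (a - 1) * (1 - t) ^ (b - 1)) /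
    (∫ t in Set.Ioc (0:ℝ) 1, t ^ (a - 1) * (1 - t) ^ (b - 1))

private lemma betaInteg' {a b : ℝ} (ha : 0 < a) (hb : 0 < b) :
    IntegrableOn (fun t : ℝ => t ^ (a - 1) * (1 - t) ^ (b - 1)) (Set.Ioc 0 1) := by
  rw [integrableOn_Ioc_iff_integrableOn_Ioo]
  have h := (Complex.betaIntegral_convergent (u := (a : ℂ)) (v := (b : ℂ))
    (by simpa using ha) (by simpa using hb)).norm
  rw [intervalIntegrable_iff_integrableOn_Ioo_of_le (by norm_num : (0:ℝ) ≤ 1)] at h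
  refine h.congr_fun ?_ measurableSet_Ioo
  intro t ht
  have ht0 : (0:ℝ) < t := ht.1
  have ht1 : (0:ℝ) < 1 - t := by linarith [ht.2]
  simp only [norm_mul]
  rw [show (1 : ℂ) - (t:ℂ) = ((1 - t : ℝ) : ℂ) by push_cast; ring]
  rw [Complex.norm_cpow_eq_rpow_re_of_pos ht0, Complex.norm_cpow_eq_rpow_re_of_pos ht1]
  norm_num

private lemma betaPos' {a b : ℝ} (ha : 0 < a) (hb : 0 < b) :
    0 < ∫ t in Set.Ioc (0:ℝ) 1, t ^ (a - 1) * (1 - t) ^ (b - 1) := by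
  rw [setIntegral_pos_iff_support_of_nonneg_ae ?_ (betaInteg' ha hb)]
  · refine lt_of_lt_of_le ?_ (measure_mono (show Set.Ioo (0:ℝ) 1 ⊆ _ from ?_))
    · simp
    · intro t ht
      refine ⟨?_, Set.Ioo_subset_Ioc_self ht⟩
      simp only [Function.mem_support]
      have h1 : (0:ℝ) < t ^ (a-1) := Real.rpow_pos_of_pos ht.1 _
      have h2 : (0:ℝ) < (1-t) ^ (b-1) := Real.rpow_pos_of_pos (by linarith [ht.2]) _
      positivity
  · rw [Filter.EventuallyLE, ae_restrict_iff' measurableSet_Ioc]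
    refine Filter.Eventually.of_forall (fun t ht => ?_)
    exact mul_nonneg (Real.rpow_nonneg ht.1.le _) (Real.rpow_nonneg (by linarith [ht.2]) _)

private lemma ratio_mono' {e : ℝ} (he : 0 ≤ e) {s t : ℝ} (hs : 0 < s) (hs1 : s < 1)
    (ht1 : t < 1) (hst : s ≤ t) :
    (s / (1 - s)) ^ e ≤ (t / (1 - t)) ^ e := by
  have h1 : (0:ℝ) < 1 - s := by linarith
  apply Real.rpow_le_rpow (by positivity) ?_ he
  rw [div_le_div_iff₀ (by linarith) (by linarith)]
  nlinarith

private lemma beta_ratio' {a b c d : ℝ} (hsum : a + b = c + d) {t : ℝ}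
    (ht0 : 0 < t) (ht1 : t < 1) :
    t ^ (a - 1) * (1 - t) ^ (b - 1)
      = (t ^ (c - 1) * (1 - t) ^ (d - 1)) * (t / (1 - t)) ^ (a - c) := by
  have h1t : (0:ℝ) < 1 - t := by linarith
  rw [Real.div_rpow ht0.le h1t.le, div_eq_mul_inv, ← Real.rpow_neg h1t.le]
  rw [show t ^ (c-1) * (1-t) ^ (d-1) * (t ^ (a-c) * (1-t) ^ (-(a-c)))
      = (t ^ (c-1) * t ^ (a-c)) * ((1-t) ^ (d-1) * (1-t) ^ (-(a-c))) by ring,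
    ← Real.rpow_add ht0, ← Real.rpow_add h1t]
  congr 2 <;> linarith

/-- If `a + b = c + d` and `a ≥ c` then `Beta(a, b)` stochastically dominates
`Beta(c, d)`. -/
theorem betaCDF_stochastic_dominance (a b c d : ℝ)
    (ha : 0 < a) (hb : 0 < b) (hc : 0 < c) (hd : 0 < d)
    (hsum : a + b = c + d) (hac : c ≤ a) :
    ∀ x : ℝ, x ∈ Set.Icc (0:ℝ) 1 → betaCDF a b x ≤ betaCDF c d x := by
  intro x hx
  obtain ⟨hx0, hx1⟩ := hx
  simp only [betaCDF]
  set f : ℝ → ℝ := fun t => t ^ (a - 1) * (1 - t) ^ (b - 1) with hf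
  set g : ℝ → ℝ := fun t => t ^ (c - 1) * (1 - t) ^ (d - 1) with hg
  have hfI := betaInteg' ha hb
  have hgI := betaInteg' hc hd
  have hfI1 : IntegrableOn f (Set.Ioc 0 x) := hfI.mono_set (Set.Ioc_subset_Ioc le_rfl hx1)
  have hfI2 : IntegrableOn f (Set.Ioc x 1) := hfI.mono_set (Set.Ioc_subset_Ioc hx0 le_rfl)
  have hgI1 : IntegrableOn g (Set.Ioc 0 x) := hgI.mono_set (Set.Ioc_subset_Ioc le_rfl hx1)
  have hgI2 : IntegrableOn g (Set.Ioc x 1) := hgI.mono_set (Set.Ioc_subset_Ioc hx0 le_rfl)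
  set A := ∫ t in Set.Ioc (0:ℝ) x, f t with hA
  set B := ∫ t in Set.Ioc x 1, f t with hB
  set C := ∫ t in Set.Ioc (0:ℝ) x, g t with hC
  set D := ∫ t in Set.Ioc x 1, g t with hD
  have hsplitf : ∫ t in Set.Ioc (0:ℝ) 1, f t = A + B := by
    rw [hA, hB, ← setIntegral_union (Set.Ioc_disjoint_Ioc_of_le le_rfl) measurableSet_Ioc
      hfI1 hfI2, Set.Ioc_union_Ioc_eq_Ioc hx0 hx1]
  have hsplitg : ∫ t in Set.Ioc (0:ℝ) 1, g t = C + D := by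
    rw [hC, hD, ← setIntegral_union (Set.Ioc_disjoint_Ioc_of_le le_rfl) measurableSet_Ioc
      hgI1 hgI2, Set.Ioc_union_Ioc_eq_Ioc hx0 hx1]
  have hfP : 0 < A + B := hsplitf ▸ betaPos' ha hb
  have hgP : 0 < C + D := hsplitg ▸ betaPos' hc hd
  have hCnn : 0 ≤ C := setIntegral_nonneg measurableSet_Ioc
    (fun t ht => mul_nonneg (Real.rpow_nonneg ht.1.le _)
      (Real.rpow_nonneg (by linarith [ht.2, hx1]) _))
  have hDnn : 0 ≤ D := setIntegral_nonneg measurableSet_Ioc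
    (fun t ht => mul_nonneg (Real.rpow_nonneg (by linarith [ht.1, hx0] : (0:ℝ) ≤ t) _)
      (Real.rpow_nonneg (by linarith [ht.2]) _))
  have key : A * D ≤ C * B := by
    rcases eq_or_lt_of_le hx0 with h0 | h0
    · have : Set.Ioc (0:ℝ) x = ∅ := by rw [← h0]; simp
      have hA0 : A = 0 := by rw [hA, this]; simp
      have hC0 : C = 0 := by rw [hC, this]; simp
      have hBnn : 0 ≤ B := by nlinarith
      simp [hA0, hC0]
    rcases eq_or_lt_of_le hx1 with h1 | h1
    · have : Set.Ioc x (1:ℝ) = ∅ := by rw [h1]; simp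
      have hB0 : B = 0 := by rw [hB, this]; simp
      have hD0 : D = 0 := by rw [hD, this]; simp
      simp [hB0, hD0]
    · set r := (x / (1 - x)) ^ (a - c) with hr
      have hrnn : 0 ≤ r := Real.rpow_nonneg (div_nonneg h0.le (by linarith)) _
      have hAC : A ≤ C * r := by
        rw [hC, ← integral_mul_const]
        refine setIntegral_mono_on hfI1 (hgI1.mul_const r) measurableSet_Ioc ?_
        intro t ht
        rw [hf, hg]
        simp only
        rw [beta_ratio' hsum ht.1 (lt_of_le_of_lt ht.2 h1)]
        exact mul_le_mul_of_nonneg_left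
          (ratio_mono' (by linarith) ht.1 (lt_of_le_of_lt ht.2 h1) h1 ht.2)
          (mul_nonneg (Real.rpow_nonneg ht.1.le _)
            (Real.rpow_nonneg (by linarith [ht.2, h1]) _))
      have hDB : D * r ≤ B := by
        rw [hB, hD, integral_Ioc_eq_integral_Ioo, integral_Ioc_eq_integral_Ioo,
          ← integral_mul_const]
        refine setIntegral_mono_on
          (((hgI.mono_set (Set.Ioc_subset_Ioc hx0 le_rfl)).mono_set
            Set.Ioo_subset_Ioc_self).mul_const r)
          (hfI2.mono_set Set.Ioo_subset_Ioc_self) measurableSet_Ioo ?_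
        intro t ht
        rw [hf, hg]
        simp only
        rw [beta_ratio' hsum (h0.trans ht.1) ht.2]
        exact mul_le_mul_of_nonneg_left
          (ratio_mono' (by linarith) h0 h1 ht.2 ht.1.le)
          (mul_nonneg (Real.rpow_nonneg (h0.trans ht.1).le _)
            (Real.rpow_nonneg (by linarith [ht.2]) _))
      calc A * D ≤ (C * r) * D := mul_le_mul_of_nonneg_right hAC hDnn
        _ = C * (D * r) := by ring
        _ ≤ C * B := mul_le_mul_of_nonneg_left hDB hCnn
  rw [hsplitf, hsplitg, div_le_div_iff₀ hfP hgP]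
  nlinarith
end

section
/- For integers a ≥ 1, b ≥ 1 and x ∈ [0,1], the Beta CDF satisfies F_{Beta(a,b)}(x) = 1 − F_{Binomial(a+b−1, x)}(a−1), i.e., the probability that a Beta(a,b) random variable is at most x equals the probability that a Binomial(a+b−1, x) random variable is at least a. -/
open MeasureTheory

/-- CDF of the Binomial distribution with `n` trials and success probability `p`. -/
noncomputable def binomCDF (n : ℕ) (p : ℝ) (k : ℕ) : ℝ :=
  ∑ i ∈ Finset.range (k + 1), (n.choose i : ℝ) * p ^ i * (1 - p) ^ (n - i)


noncomputable def tailSum (p q : ℕ) (y : ℝ) : ℝ :=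
  ∑ i ∈ Finset.Ico (p + 1) (p + q + 2),
    ((p + q + 1).choose i : ℝ) * (y ^ i * (1 - y) ^ (p + q + 1 - i))

noncomputable def Dterm (p q i : ℕ) (y : ℝ) : ℝ :=
  (i : ℝ) * ((p + q + 1).choose i : ℝ) * (y ^ (i - 1) * (1 - y) ^ (p + q + 1 - i))

lemma hasDerivAt_term (i m : ℕ) (y : ℝ) :
    HasDerivAt (fun y : ℝ => y ^ i * (1 - y) ^ m)
      ((i : ℝ) * y ^ (i - 1) * (1 - y) ^ m - (m : ℝ) * (y ^ i * (1 - y) ^ (m - 1))) y := by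
  have h1 : HasDerivAt (fun y : ℝ => (1 - y) ^ m)
      ((m : ℝ) * (1 - y) ^ (m - 1) * (-1)) y :=
    ((hasDerivAt_id y).const_sub 1).pow m
  have h2 := (hasDerivAt_pow i y).fun_mul h1
  exact h2.congr_deriv (by ring)

lemma hasDerivAt_tailSum (p q : ℕ) (y : ℝ) :
    HasDerivAt (tailSum p q)
      (((p + 1 : ℕ) : ℝ) * ((p + q + 1).choose (p + 1) : ℝ) * (y ^ p * (1 - y) ^ q)) y := by
  set n := p + q + 1 with hn
  have hterm : ∀ i ∈ Finset.Ico (p + 1) (p + q + 2),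
      HasDerivAt (fun y : ℝ => ((n.choose i : ℝ)) * (y ^ i * (1 - y) ^ (n - i)))
        (Dterm p q i y - Dterm p q (i + 1) y) y := by
    intro i hi
    have h := (hasDerivAt_term i (n - i) y).const_mul ((n.choose i : ℝ))
    have hid : ((n - i : ℕ) : ℝ) * (n.choose i : ℝ)
        = ((i + 1 : ℕ) : ℝ) * (n.choose (i + 1) : ℝ) := by
      have h2 : (n - i) * n.choose i = (i + 1) * n.choose (i + 1) := by
        rw [mul_comm, ← Nat.choose_succ_right_eq, mul_comm]
      exact_mod_cast congrArg (fun k : ℕ => (k : ℝ)) h2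
    have heq : Dterm p q i y - Dterm p q (i + 1) y
        = (n.choose i : ℝ) * ((i : ℝ) * y ^ (i - 1) * (1 - y) ^ (n - i)
            - ((n - i : ℕ) : ℝ) * (y ^ i * (1 - y) ^ (n - i - 1))) := by
      simp only [Dterm, ← hn]
      have hsub1 : n - i - 1 = n - (i + 1) := by omega
      have hsub2 : i + 1 - 1 = i := rfl
      rw [hsub1, hsub2, ← hid]
      push_cast
      ring
    rw [heq]
    exact h
  have hsum := HasDerivAt.fun_sum hterm
  have htel : ∑ i ∈ Finset.Ico (p + 1) (p + q + 2), (Dterm p q i y - Dterm p q (i + 1) y)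
      = Dterm p q (p + 1) y - Dterm p q (p + q + 2) y := by
    rw [Finset.sum_Ico_eq_sum_range]
    have h0 : p + q + 2 - (p + 1) = q + 1 := by omega
    rw [h0]
    have htel2 := Finset.sum_range_sub' (fun k => Dterm p q (p + 1 + k) y) (q + 1)
    have hcongr : ∀ k, p + 1 + k + 1 = p + 1 + (k + 1) := fun k => by omega
    simp only [hcongr]
    rw [htel2]
    congr 2 <;> omega
  have hD2 : Dterm p q (p + q + 2) y = 0 := by
    simp [Dterm, hn, Nat.choose_succ_self]
  have hD1 : Dterm p q (p + 1) y
      = ((p + 1 : ℕ) : ℝ) * ((p + q + 1).choose (p + 1) : ℝ) * (y ^ p * (1 - y) ^ q) := by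
    simp only [Dterm]
    have h2 : p + q + 1 - (p + 1) = q := by omega
    rw [h2]
    norm_num
  rw [htel, hD2, hD1, sub_zero] at hsum
  exact hsum

lemma tailSum_zero (p q : ℕ) : tailSum p q 0 = 0 := by
  apply Finset.sum_eq_zero
  intro i hi
  rw [Finset.mem_Ico] at hi
  have : i ≠ 0 := by omega
  simp [zero_pow this]

lemma tailSum_one (p q : ℕ) : tailSum p q 1 = 1 := by
  unfold tailSum
  rw [Finset.sum_eq_single (p + q + 1)]
  · simp
  · intro i hi hne
    rw [Finset.mem_Ico] at hi
    have h1 : p + q + 1 - i ≠ 0 := by omega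
    simp [zero_pow h1]
  · intro h
    exact absurd (Finset.mem_Ico.mpr ⟨by omega, by omega⟩) h

lemma tailSum_eq (p q : ℕ) (x : ℝ) :
    tailSum p q x = 1 - ∑ i ∈ Finset.range (p + 1),
      (((p + q + 1).choose i : ℝ)) * x ^ i * (1 - x) ^ (p + q + 1 - i) := by
  have htot : (1 : ℝ) = ∑ i ∈ Finset.range (p + q + 2),
      (((p + q + 1).choose i : ℝ)) * x ^ i * (1 - x) ^ (p + q + 1 - i) := by
    have h := add_pow x (1 - x) (p + q + 1)
    simp only [add_sub_cancel, one_pow] at h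
    refine h.trans (Finset.sum_congr rfl fun i _ => by ring)
  have hsplit : ∑ i ∈ Finset.range (p + 1),
        (((p + q + 1).choose i : ℝ)) * x ^ i * (1 - x) ^ (p + q + 1 - i)
      + ∑ i ∈ Finset.Ico (p + 1) (p + q + 2),
        (((p + q + 1).choose i : ℝ)) * x ^ i * (1 - x) ^ (p + q + 1 - i)
      = ∑ i ∈ Finset.range (p + q + 2),
        (((p + q + 1).choose i : ℝ)) * x ^ i * (1 - x) ^ (p + q + 1 - i) := by
    rw [Finset.range_eq_Ico, Finset.range_eq_Ico]
    exact Finset.sum_Ico_consecutive _ (by omega) (by omega)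
  have : tailSum p q x = ∑ i ∈ Finset.Ico (p + 1) (p + q + 2),
      (((p + q + 1).choose i : ℝ)) * x ^ i * (1 - x) ^ (p + q + 1 - i) := by
    unfold tailSum; apply Finset.sum_congr rfl; intro i _; ring
  rw [this]
  linarith [htot, hsplit]

lemma integral_eq (p q : ℕ) (x : ℝ) (hx0 : 0 ≤ x) :
    (((p + 1 : ℕ) : ℝ) * ((p + q + 1).choose (p + 1) : ℝ)) *
        ∫ t in Set.Ioc (0:ℝ) x, t ^ p * (1 - t) ^ q
      = tailSum p q x := by
  set c : ℝ := ((p + 1 : ℕ) : ℝ) * ((p + q + 1).choose (p + 1) : ℝ) with hc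
  have hint : ∫ t in Set.Ioc (0:ℝ) x, t ^ p * (1 - t) ^ q
      = ∫ t in (0:ℝ)..x, t ^ p * (1 - t) ^ q := by
    rw [intervalIntegral.integral_of_le hx0]
  rw [hint]
  have hcont : Continuous (fun t : ℝ => c * (t ^ p * (1 - t) ^ q)) := by continuity
  have hftc := intervalIntegral.integral_eq_sub_of_hasDerivAt
    (f := tailSum p q)
    (f' := fun t : ℝ => c * (t ^ p * (1 - t) ^ q))
    (fun t _ => hasDerivAt_tailSum p q t)
    (hcont.intervalIntegrable 0 x)
  rw [← intervalIntegral.integral_const_mul, hftc, tailSum_zero, sub_zero]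

/-- The Beta–Binomial identity: for integer parameters `a, b ≥ 1`,
`F_{Beta(a,b)}(x) = 1 − F_{Binomial(a+b−1, x)}(a−1)`. -/
theorem betaCDF_eq_one_sub_binomCDF (a b : ℕ) (ha : 1 ≤ a) (hb : 1 ≤ b)
    (x : ℝ) (hx : x ∈ Set.Icc (0:ℝ) 1) :
    betaCDF (a : ℝ) (b : ℝ) x = 1 - binomCDF (a + b - 1) x (a - 1) := by
  obtain ⟨p, rfl⟩ : ∃ p, a = p + 1 := ⟨a - 1, by omega⟩
  obtain ⟨q, rfl⟩ : ∃ q, b = q + 1 := ⟨b - 1, by omega⟩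
  obtain ⟨hx0, hx1⟩ := hx
  have hn : p + 1 + (q + 1) - 1 = p + q + 1 := by omega
  have hk : p + 1 - 1 = p := by omega
  -- rewrite rpow exponents as natural powers
  have hrw : ∀ y : ℝ, (∫ t in Set.Ioc (0:ℝ) y,
        t ^ (((p:ℕ)+1 : ℝ) - 1) * (1 - t) ^ (((q:ℕ)+1 : ℝ) - 1))
      = ∫ t in Set.Ioc (0:ℝ) y, t ^ p * (1 - t) ^ q := by
    intro y
    apply integral_congr_ae
    filter_upwards with t
    have e1 : (((p:ℕ)+1 : ℝ) - 1) = ((p : ℕ) : ℝ) := by push_cast; ring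
    have e2 : (((q:ℕ)+1 : ℝ) - 1) = ((q : ℕ) : ℝ) := by push_cast; ring
    rw [e1, e2, Real.rpow_natCast, Real.rpow_natCast]
  set c : ℝ := ((p + 1 : ℕ) : ℝ) * ((p + q + 1).choose (p + 1) : ℝ) with hc
  have hcne : c ≠ 0 := by
    have h1 : 0 < (p + q + 1).choose (p + 1) := Nat.choose_pos (by omega)
    positivity
  have hIx := integral_eq p q x hx0
  have hI1 := integral_eq p q 1 zero_le_one
  rw [tailSum_one] at hI1
  unfold betaCDF
  push_cast
  rw [hrw x, hrw 1]
  rw [← hc] at hIx hI1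
  have hIx' : (∫ t in Set.Ioc (0:ℝ) x, t ^ p * (1 - t) ^ q) = tailSum p q x / c := by
    rw [eq_div_iff hcne, mul_comm]; exact hIx
  have hI1' : (∫ t in Set.Ioc (0:ℝ) 1, t ^ p * (1 - t) ^ q) = 1 / c := by
    rw [eq_div_iff hcne, mul_comm]; exact hI1
  have hdiv : tailSum p q x / c / (1 / c) = tailSum p q x := by
    field_simp
  rw [hIx', hI1', hdiv, tailSum_eq]
  unfold binomCDF
  rw [hn]
end

section
/- Let S, S', F, F' be nonnegative-integer-valued random variables on a common probability space with S' ≤ S pointwise, F ≤ F' pointwise, and S + F = S' + F' pointwise. Then for every x ∈ [0,1], E[F_{Beta(1+S', 1+F')}(x)] ≥ E[F_{Beta(1+S, 1+F)}(x)]; i.e., the Beta mixture with counts (S, F) stochastically dominates the mixture with counts (S', F'). -/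
open MeasureTheory

noncomputable def gInt (s f : ℕ) (x : ℝ) : ℝ :=
  ∫ t in (0:ℝ)..x, t ^ s * (1 - t) ^ f

lemma contInt (s f : ℕ) : Continuous (fun t : ℝ => t ^ s * (1 - t) ^ f) :=
  (continuous_id.pow s).mul ((continuous_const.sub continuous_id).pow f)

lemma intInt (s f : ℕ) (a b : ℝ) :
    IntervalIntegrable (fun t : ℝ => t ^ s * (1 - t) ^ f) volume a b :=
  (contInt s f).intervalIntegrable a b

lemma gInt_nonneg (s f : ℕ) {x : ℝ} (hx0 : 0 ≤ x) (hx1 : x ≤ 1) : 0 ≤ gInt s f x := by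
  apply intervalIntegral.integral_nonneg hx0
  intro t ht
  exact mul_nonneg (pow_nonneg ht.1 s) (pow_nonneg (by linarith [ht.2]) f)

lemma gInt_le (s f : ℕ) {x : ℝ} (hx0 : 0 ≤ x) (hx1 : x ≤ 1) : gInt s f x ≤ gInt s f 1 := by
  have h : gInt s f x + (∫ t in x..1, t ^ s * (1 - t) ^ f) = gInt s f 1 :=
    intervalIntegral.integral_add_adjacent_intervals (intInt s f 0 x) (intInt s f x 1)
  have h2 : 0 ≤ ∫ t in x..1, t ^ s * (1 - t) ^ f := by
    apply intervalIntegral.integral_nonneg hx1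
    intro t ht
    exact mul_nonneg (pow_nonneg (le_trans hx0 ht.1) s) (pow_nonneg (by linarith [ht.2]) f)
  linarith

lemma gInt_pos (s f : ℕ) : 0 < gInt s f 1 := by
  apply intervalIntegral.intervalIntegral_pos_of_pos_on (intInt s f 0 1)
  · intro t ht
    exact mul_pos (pow_pos ht.1 s) (pow_pos (by linarith [ht.2]) f)
  · norm_num

lemma betaCDF_nat (s f : ℕ) {x : ℝ} (hx : 0 ≤ x) :
    betaCDF (1 + s) (1 + f) x = gInt s f x / gInt s f 1 := by
  have hrw : ∀ t : ℝ, t ^ ((1 + (s:ℝ)) - 1) * (1 - t) ^ ((1 + (f:ℝ)) - 1)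
      = t ^ s * (1 - t) ^ f := by
    intro t
    rw [add_sub_cancel_left, add_sub_cancel_left, Real.rpow_natCast, Real.rpow_natCast]
  unfold betaCDF gInt
  simp only [hrw]
  rw [intervalIntegral.integral_of_le hx, intervalIntegral.integral_of_le (by norm_num : (0:ℝ) ≤ 1)]

lemma ftc_key (s f : ℕ) (x : ℝ) :
    ((s:ℝ) + 1) * gInt s (f + 1) x - ((f:ℝ) + 1) * gInt (s + 1) f x
      = x ^ (s + 1) * (1 - x) ^ (f + 1) := by
  have hderiv : ∀ t ∈ Set.uIcc (0:ℝ) x, HasDerivAt (fun u : ℝ => u ^ (s+1) * (1-u) ^ (f+1))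
      (((s:ℝ)+1) * (t ^ s * (1-t) ^ (f+1)) - ((f:ℝ)+1) * (t ^ (s+1) * (1-t) ^ f)) t := by
    intro t _
    have h1 : HasDerivAt (fun u : ℝ => u ^ (s+1)) (((s:ℝ)+1) * t ^ s) t := by
      have := hasDerivAt_pow (s+1) t
      simpa using this
    have h2 : HasDerivAt (fun u : ℝ => (1-u) ^ (f+1)) (-(((f:ℝ)+1) * (1-t) ^ f)) t := by
      have hin : HasDerivAt (fun u : ℝ => 1 - u) (-1) t := by
        simpa using (hasDerivAt_id t).const_sub (1:ℝ)
      have := (hasDerivAt_pow (f+1) (1-t)).comp t hin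
      simp only [Nat.add_sub_cancel, Nat.cast_add, Nat.cast_one] at this
      exact this.congr_deriv (by ring)
    have := h1.mul h2
    exact this.congr_deriv (by ring)
  have hcont : IntervalIntegrable (fun t : ℝ =>
      ((s:ℝ)+1) * (t ^ s * (1-t) ^ (f+1)) - ((f:ℝ)+1) * (t ^ (s+1) * (1-t) ^ f)) volume 0 x := by
    apply Continuous.intervalIntegrable
    exact (continuous_const.mul (contInt s (f+1))).sub (continuous_const.mul (contInt (s+1) f))
  have := intervalIntegral.integral_eq_sub_of_hasDerivAt hderiv hcont
  rw [intervalIntegral.integral_sub ((intInt s (f+1) 0 x).const_mul _)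
      ((intInt (s+1) f 0 x).const_mul _),
    intervalIntegral.integral_const_mul, intervalIntegral.integral_const_mul] at this
  unfold gInt
  rw [this]
  simp

lemma step_ineq (s f : ℕ) {x : ℝ} (hx0 : 0 ≤ x) (hx1 : x ≤ 1) :
    betaCDF (1 + (s + 1 : ℕ)) (1 + f) x ≤ betaCDF (1 + s) (1 + (f + 1 : ℕ)) x := by
  rw [betaCDF_nat (s+1) f hx0, betaCDF_nat s (f+1) hx0]
  have hC := gInt_pos (s+1) f
  have hD := gInt_pos s (f+1)
  rw [div_le_div_iff₀ hC hD]
  set A := gInt (s+1) f x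
  set B := gInt s (f+1) x
  set C := gInt (s+1) f 1
  set D := gInt s (f+1) 1
  have h1 : ((s:ℝ)+1) * D - ((f:ℝ)+1) * C = 0 := by
    have := ftc_key s f 1
    simpa using this
  have h2 : ((s:ℝ)+1) * B - ((f:ℝ)+1) * A = x ^ (s+1) * (1-x) ^ (f+1) := ftc_key s f x
  have h3 : 0 ≤ x ^ (s+1) * (1-x) ^ (f+1) :=
    mul_nonneg (pow_nonneg hx0 _) (pow_nonneg (by linarith) _)
  have hs : (0:ℝ) < (s:ℝ) + 1 := by positivity
  have hf : (0:ℝ) < (f:ℝ) + 1 := by positivity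
  have hAB : ((f:ℝ)+1) * A ≤ ((s:ℝ)+1) * B := by linarith
  have h4 : ((f:ℝ)+1) * A * (((f:ℝ)+1) * C) ≤ ((s:ℝ)+1) * B * (((f:ℝ)+1) * C) :=
    mul_le_mul_of_nonneg_right hAB (by positivity)
  have e : ((f:ℝ)+1) * C = ((s:ℝ)+1) * D := by linarith
  have key : (((s:ℝ)+1) * (((f:ℝ)+1))) * (A * D) ≤ (((s:ℝ)+1) * (((f:ℝ)+1))) * (B * C) := by
    calc (((s:ℝ)+1) * (((f:ℝ)+1))) * (A * D) = (((f:ℝ)+1) * A) * (((s:ℝ)+1) * D) := by ring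
      _ = (((f:ℝ)+1) * A) * (((f:ℝ)+1) * C) := by rw [e]
      _ ≤ (((s:ℝ)+1) * B) * (((f:ℝ)+1) * C) := h4
      _ = (((s:ℝ)+1) * (((f:ℝ)+1))) * (B * C) := by ring
  exact le_of_mul_le_mul_left key (mul_pos hs hf)

lemma chain_ineq (d s f : ℕ) {x : ℝ} (hx0 : 0 ≤ x) (hx1 : x ≤ 1) :
    betaCDF (1 + (s + d : ℕ)) (1 + f) x ≤ betaCDF (1 + s) (1 + (f + d : ℕ)) x := by
  induction d generalizing f with
  | zero => simp
  | succ d ih =>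
    calc betaCDF (1 + (s + (d+1) : ℕ)) (1 + f) x
        ≤ betaCDF (1 + (s + d : ℕ)) (1 + (f + 1 : ℕ)) x := by
          have := step_ineq (s + d) f hx0 hx1
          convert this using 4 <;> push_cast <;> ring
      _ ≤ betaCDF (1 + s) (1 + (f + (d+1) : ℕ)) x := by
          have := ih (f + 1)
          convert this using 4 <;> push_cast <;> ring

lemma betaCDF_mem_Icc (s f : ℕ) {x : ℝ} (hx0 : 0 ≤ x) (hx1 : x ≤ 1) :
    betaCDF (1 + s) (1 + f) x ∈ Set.Icc (0:ℝ) 1 := by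
  rw [betaCDF_nat s f hx0]
  constructor
  · exact div_nonneg (gInt_nonneg s f hx0 hx1) (gInt_pos s f).le
  · rw [div_le_one (gInt_pos s f)]
    exact gInt_le s f hx0 hx1

lemma integrable_betaCDF {Ω : Type*} [MeasurableSpace Ω] (P : Measure Ω)
    [IsProbabilityMeasure P] (S F : Ω → ℕ) (hS : Measurable S) (hF : Measurable F)
    {x : ℝ} (hx0 : 0 ≤ x) (hx1 : x ≤ 1) :
    Integrable (fun ω => betaCDF (1 + S ω) (1 + F ω) x) P := by
  have hmeas : Measurable (fun ω => betaCDF (1 + S ω) (1 + F ω) x) := by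
    have : (fun ω => betaCDF (1 + S ω) (1 + F ω) x)
        = (fun p : ℕ × ℕ => betaCDF (1 + p.1) (1 + p.2) x) ∘ (fun ω => (S ω, F ω)) := rfl
    rw [this]
    exact (measurable_of_countable _).comp (hS.prodMk hF)
  apply Integrable.mono' (integrable_const (1:ℝ)) hmeas.aestronglyMeasurable
  filter_upwards with ω
  have := betaCDF_mem_Icc (S ω) (F ω) hx0 hx1
  rw [Real.norm_eq_abs, abs_le]
  exact ⟨by linarith [this.1], this.2⟩

/-- Coupling argument: replacing observed successes by pointwise fewer successes
(with the same total count) makes the Beta posterior mixture stochastically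
smaller. -/
theorem beta_mixture_dominance {Ω : Type*} [MeasurableSpace Ω]
    (P : Measure Ω) [IsProbabilityMeasure P]
    (S S' F F' : Ω → ℕ)
    (hS : Measurable S) (hS' : Measurable S') (hF : Measurable F)
    (hF' : Measurable F')
    (hle : ∀ ω, S' ω ≤ S ω) (hle' : ∀ ω, F ω ≤ F' ω)
    (htot : ∀ ω, S ω + F ω = S' ω + F' ω) :
    ∀ x : ℝ, x ∈ Set.Icc (0:ℝ) 1 →
      (∫ ω, betaCDF (1 + S ω) (1 + F ω) x ∂P) ≤
        ∫ ω, betaCDF (1 + S' ω) (1 + F' ω) x ∂P := by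
  intro x hx
  obtain ⟨hx0, hx1⟩ := hx
  apply integral_mono
  · exact integrable_betaCDF P S F hS hF hx0 hx1
  · exact integrable_betaCDF P S' F' hS' hF' hx0 hx1
  · intro ω
    have hd : S ω = S' ω + (S ω - S' ω) := by have := hle ω; omega
    have hd' : F' ω = F ω + (S ω - S' ω) := by
      have h1 := htot ω; have h2 := hle ω; omega
    simp only
    rw [hd, hd']
    exact chain_ineq (S ω - S' ω) (S' ω) (F ω) hx0 hx1
end
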